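/- Let d ≥ 2 and define R_1 f_0(r) := sup_{t∈[1,2], t ≤ r/2} (1/t)|∫_{r−t}^{r+t} f_0(s) ds|. Then for all 1 ≤ p ≤ q ≤ ∞, ‖R_1 f_0‖_{L^q(r^{d−1}dr)} ≲ ‖f_0‖_{L^p(s^{d−1}ds)}. -/

import Mathlib

open MeasureTheory Filter Set
open scoped ENNReal NNReal

noncomputable section

/-- The measure `r^{d-1} dr` on `(0,∞)`. -/
def muWeight (d : ℕ) : Measure ℝ :=
  ((volume : Measure ℝ).restrict (Set.Ioi 0)).withDensity
    (fun s => ENNReal.ofReal (s ^ (d - 1)))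

/-- `R_1 f_0(r) = sup_{t ∈ [1,2], t ≤ r/2} (1/t) |∫_{r-t}^{r+t} f_0(s) ds|`. -/
def R1op (f0 : ℝ → ℝ) (r : ℝ) : ℝ :=
  ⨆ t : {t : ℝ // t ∈ Set.Icc (1:ℝ) 2 ∧ t ≤ r/2},
    (1/(t:ℝ)) * |∫ s in (r - (t:ℝ))..(r + (t:ℝ)), f0 s|

namespace R1aux

/-- The enlarged interval containing `[r-t, r+t]` for all admissible `t`. -/
def Sr (r : ℝ) : Set ℝ := Icc (max (r/2) (r-2)) (r+2)

lemma Sr_meas (r : ℝ) : MeasurableSet (Sr r) := measurableSet_Icc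

lemma meas_weight (d : ℕ) : Measurable fun s : ℝ => ENNReal.ofReal (s ^ (d - 1)) :=
  ENNReal.measurable_ofReal.comp (measurable_id.pow_const _)

lemma Sr_subset_Ioi {r : ℝ} (hr : 2 ≤ r) : Sr r ⊆ Ioi (0:ℝ) := by
  intro s hs
  have h1 : r/2 ≤ s := le_trans (le_max_left _ _) hs.1
  have : (1:ℝ) ≤ r/2 := by linarith
  simp only [mem_Ioi]; linarith

lemma one_le_of_mem_Sr {r s : ℝ} (hr : 2 ≤ r) (hs : s ∈ Sr r) : (1:ℝ) ≤ s := by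
  have h1 : r/2 ≤ s := le_trans (le_max_left _ _) hs.1
  linarith

lemma vol_Sr_le {r : ℝ} (hr : 2 ≤ r) : volume (Sr r) ≤ 4 := by
  rw [Sr, Real.volume_Icc]
  have h : r + 2 - max (r/2) (r-2) ≤ 4 := by
    have := le_max_right (r/2) (r-2); linarith
  calc ENNReal.ofReal (r + 2 - max (r/2) (r-2)) ≤ ENNReal.ofReal 4 :=
        ENNReal.ofReal_le_ofReal h
    _ = 4 := by norm_num

/-- Measurability of `r ↦ ∫⁻ s in Sr r, F s`. -/
lemma meas_setLIntegral_Sr {F : ℝ → ℝ≥0∞} (hF : Measurable F) :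
    Measurable fun r => ∫⁻ s in Sr r, F s ∂volume := by
  have hU : MeasurableSet {p : ℝ × ℝ | max (p.1/2) (p.1-2) ≤ p.2 ∧ p.2 ≤ p.1 + 2} :=
    (measurableSet_le ((measurable_fst.div_const 2).max (measurable_fst.sub_const 2))
      measurable_snd).inter (measurableSet_le measurable_snd (measurable_fst.add_const 2))
  have heq : (fun r => ∫⁻ s in Sr r, F s ∂volume)
      = fun r => ∫⁻ s, ({p : ℝ × ℝ | max (p.1/2) (p.1-2) ≤ p.2 ∧ p.2 ≤ p.1 + 2}).indicator
          (fun p => F p.2) (r, s) ∂volume := by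
    funext r
    rw [← lintegral_indicator (Sr_meas r)]
    refine lintegral_congr fun s => ?_
    simp only [Set.indicator_apply, Sr, mem_Icc, mem_setOf_eq]
  rw [heq]
  exact Measurable.lintegral_prod_right' ((hF.comp measurable_snd).indicator hU)

/-- Pointwise bound: `R1 f_0(r)` is controlled by the integral over `Sr r` (and vanishes
for `r < 2`). -/
lemma lemA (f0 : ℝ → ℝ) (r : ℝ) :
    (‖R1op f0 r‖₊ : ℝ≥0∞) ≤
      (Ici (2:ℝ)).indicator (fun r => ∫⁻ s in Sr r, (‖f0 s‖₊ : ℝ≥0∞) ∂volume) r := by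
  rcases lt_or_ge r 2 with hr | hr
  · have hempty : IsEmpty {t : ℝ // t ∈ Set.Icc (1:ℝ) 2 ∧ t ≤ r/2} := by
      constructor
      rintro ⟨t, ⟨⟨ht1, _⟩, ht2⟩⟩
      have : r/2 < 1 := by linarith
      linarith
    have h0 : R1op f0 r = 0 := Real.iSup_of_isEmpty _
    have : r ∉ Ici (2:ℝ) := by simp [mem_Ici]; linarith
    simp [h0, indicator_of_notMem this]
  · rw [indicator_of_mem (mem_Ici.2 hr)]
    set I : ℝ≥0∞ := ∫⁻ s in Sr r, (‖f0 s‖₊ : ℝ≥0∞) ∂volume with hI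
    by_cases hItop : I = ⊤
    · rw [hItop]; exact le_top
    have hnn : 0 ≤ R1op f0 r := Real.iSup_nonneg fun t =>
      mul_nonneg (div_nonneg zero_le_one (le_trans zero_le_one t.2.1.1)) (abs_nonneg _)
    rw [← enorm_eq_nnnorm, Real.enorm_eq_ofReal hnn]
    refine ENNReal.ofReal_le_of_le_toReal ?_
    refine Real.iSup_le (fun t => ?_) ENNReal.toReal_nonneg
    obtain ⟨⟨ht1, ht2⟩, ht3⟩ := t.2
    have htpos : (0:ℝ) < t := lt_of_lt_of_le one_pos ht1
    have hstep : (1/(t:ℝ)) * |∫ s in (r - (t:ℝ))..(r + (t:ℝ)), f0 s|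
        ≤ |∫ s in (r - (t:ℝ))..(r + (t:ℝ)), f0 s| := by
      have h1t : 1/(t:ℝ) ≤ 1 := by
        rw [div_le_one htpos]; exact ht1
      exact mul_le_of_le_one_left (abs_nonneg _) h1t
    refine le_trans hstep ?_
    have hsub : Ioc (r - (t:ℝ)) (r + (t:ℝ)) ⊆ Sr r := by
      intro x hx
      obtain ⟨hx1, hx2⟩ := hx
      constructor
      · refine max_le ?_ ?_ <;> [skip; skip]
        · have : r - (t:ℝ) ≥ r/2 := by linarith
          linarith
        · have : r - (t:ℝ) ≥ r - 2 := by linarith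
          linarith
      · linarith
    have key : (‖∫ s in (r - (t:ℝ))..(r + (t:ℝ)), f0 s‖₊ : ℝ≥0∞) ≤ I := by
      rw [intervalIntegral.integral_of_le (by linarith : r - (t:ℝ) ≤ r + (t:ℝ))]
      refine le_trans (enorm_integral_le_lintegral_enorm _) ?_
      exact lintegral_mono_set hsub
    calc |∫ s in (r - (t:ℝ))..(r + (t:ℝ)), f0 s|
        = ((‖∫ s in (r - (t:ℝ))..(r + (t:ℝ)), f0 s‖₊ : ℝ≥0∞)).toReal := by
          simp [Real.norm_eq_abs]
      _ ≤ I.toReal := ENNReal.toReal_mono hItop key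

/-- Rewriting integrals against `muWeight`. -/
lemma muWeight_lintegral (d : ℕ) {g : ℝ → ℝ≥0∞} (hg : Measurable g) :
    ∫⁻ r, g r ∂(muWeight d)
      = ∫⁻ r in Ioi (0:ℝ), ENNReal.ofReal (r ^ (d - 1)) * g r ∂volume := by
  rw [muWeight, lintegral_withDensity_eq_lintegral_mul _ (meas_weight d) hg]
  rfl

lemma eLpNorm_rpow_eq (f0 : ℝ → ℝ) (d : ℕ) {p : ℝ≥0∞} (hp : p ≠ 0) (hp' : p ≠ ⊤) :
    (eLpNorm f0 p (muWeight d)) ^ p.toReal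
      = ∫⁻ s, (‖f0 s‖₊ : ℝ≥0∞) ^ p.toReal ∂(muWeight d) := by
  rw [eLpNorm_eq_lintegral_rpow_enorm_toReal hp hp', ← ENNReal.rpow_mul, one_div,
    inv_mul_cancel₀ (ENNReal.toReal_ne_zero.mpr ⟨hp, hp'⟩), ENNReal.rpow_one]
  rfl

/-- Comparison of the flat integral over `Sr r` with the weighted integral. -/
lemma lemB2 (f0 : ℝ → ℝ) (hf : Measurable f0) (d : ℕ) (pr : ℝ) {r : ℝ} (hr : 2 ≤ r) :
    ∫⁻ s in Sr r, (‖f0 s‖₊ : ℝ≥0∞) ^ pr ∂volume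
      ≤ ENNReal.ofReal ((2/r) ^ (d - 1)) *
        ∫⁻ s in Ioi (0:ℝ), ENNReal.ofReal (s ^ (d - 1)) * (‖f0 s‖₊ : ℝ≥0∞) ^ pr ∂volume := by
  have hr0 : (0:ℝ) < r := by linarith
  have key : ∀ s ∈ Sr r, (‖f0 s‖₊ : ℝ≥0∞) ^ pr
      ≤ ENNReal.ofReal ((2/r) ^ (d - 1)) *
        (ENNReal.ofReal (s ^ (d - 1)) * (‖f0 s‖₊ : ℝ≥0∞) ^ pr) := by
    intro s hs
    have hs2 : r/2 ≤ s := le_trans (le_max_left _ _) hs.1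
    have hs0 : (0:ℝ) ≤ s := by linarith
    have h1 : (1:ℝ) ≤ (2/r) * s := by
      rw [div_mul_eq_mul_div, le_div_iff₀ hr0]; linarith
    have h2 : (1:ℝ) ≤ (2/r) ^ (d-1) * s ^ (d-1) := by
      rw [← mul_pow]
      calc (1:ℝ) = 1 ^ (d-1) := (one_pow _).symm
        _ ≤ ((2/r) * s) ^ (d-1) := pow_le_pow_left₀ zero_le_one h1 _
    have h3 : (1:ℝ≥0∞) ≤ ENNReal.ofReal ((2/r) ^ (d-1)) * ENNReal.ofReal (s ^ (d-1)) := by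
      rw [← ENNReal.ofReal_mul (by positivity), ← ENNReal.ofReal_one]
      exact ENNReal.ofReal_le_ofReal h2
    calc (‖f0 s‖₊ : ℝ≥0∞) ^ pr = 1 * (‖f0 s‖₊ : ℝ≥0∞) ^ pr := (one_mul _).symm
      _ ≤ (ENNReal.ofReal ((2/r) ^ (d-1)) * ENNReal.ofReal (s ^ (d-1)))
            * (‖f0 s‖₊ : ℝ≥0∞) ^ pr := mul_le_mul_left h3 _
      _ = ENNReal.ofReal ((2/r) ^ (d-1)) *
            (ENNReal.ofReal (s ^ (d-1)) * (‖f0 s‖₊ : ℝ≥0∞) ^ pr) := by rw [mul_assoc]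
  calc ∫⁻ s in Sr r, (‖f0 s‖₊ : ℝ≥0∞) ^ pr ∂volume
      ≤ ∫⁻ s in Sr r, ENNReal.ofReal ((2/r) ^ (d-1)) *
          (ENNReal.ofReal (s ^ (d-1)) * (‖f0 s‖₊ : ℝ≥0∞) ^ pr) ∂volume :=
        setLIntegral_mono' (Sr_meas r) key
    _ = ENNReal.ofReal ((2/r) ^ (d-1)) *
          ∫⁻ s in Sr r, ENNReal.ofReal (s ^ (d-1)) * (‖f0 s‖₊ : ℝ≥0∞) ^ pr ∂volume :=
        lintegral_const_mul' _ _ ENNReal.ofReal_ne_top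
    _ ≤ ENNReal.ofReal ((2/r) ^ (d-1)) *
          ∫⁻ s in Ioi (0:ℝ), ENNReal.ofReal (s ^ (d-1)) * (‖f0 s‖₊ : ℝ≥0∞) ^ pr ∂volume :=
        mul_le_mul_right (lintegral_mono_set (Sr_subset_Ioi hr)) _

/-- Hölder's inequality on `Sr r`. -/
lemma lemB1 (f0 : ℝ → ℝ) (hf : Measurable f0) {pr : ℝ} (hpr : 1 ≤ pr) {r : ℝ} (hr : 2 ≤ r) :
    ∫⁻ s in Sr r, (‖f0 s‖₊ : ℝ≥0∞) ∂volume
      ≤ (∫⁻ s in Sr r, (‖f0 s‖₊ : ℝ≥0∞) ^ pr ∂volume) ^ (1/pr) * 4 := by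
  rcases eq_or_lt_of_le hpr with h1 | h1
  · rw [← h1]
    simp only [ENNReal.rpow_one, one_div_one]
    calc ∫⁻ s in Sr r, (‖f0 s‖₊ : ℝ≥0∞) ∂volume
        = (∫⁻ s in Sr r, (‖f0 s‖₊ : ℝ≥0∞) ∂volume) * 1 := (mul_one _).symm
      _ ≤ (∫⁻ s in Sr r, (‖f0 s‖₊ : ℝ≥0∞) ∂volume) * 4 := by
          gcongr; norm_num
  · set q' : ℝ := Real.conjExponent pr
    have hpq : pr.HolderConjugate q' := Real.HolderConjugate.conjExponent h1
    have hq1 : 1 < q' := hpq.symm.lt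
    have holder := ENNReal.lintegral_mul_le_Lp_mul_Lq (volume.restrict (Sr r)) hpq
      hf.nnnorm.coe_nnreal_ennreal.aemeasurable (aemeasurable_const (b := (1:ℝ≥0∞)))
    simp only [Pi.mul_apply, mul_one, ENNReal.one_rpow] at holder
    rw [lintegral_const, Measure.restrict_apply_univ, one_mul] at holder
    refine le_trans holder ?_
    gcongr
    calc (volume (Sr r)) ^ (1/q') ≤ (4:ℝ≥0∞) ^ (1/q') := by
          gcongr
          · exact vol_Sr_le hr
      _ ≤ (4:ℝ≥0∞) ^ (1:ℝ) := by
          apply ENNReal.rpow_le_rpow_of_exponent_le (by norm_num)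
          rw [div_le_one (by linarith)]; linarith
      _ = 4 := ENNReal.rpow_one _

/-- The key uniform bound: `∫_{Sr r} |f0| ≤ 4 (2/r)^{(d-1)/p} ‖f0‖_{L^p(μ)}`. -/
lemma lemB (d : ℕ) (f0 : ℝ → ℝ) (hf : Measurable f0) {p : ℝ≥0∞} (hp : 1 ≤ p) (hp' : p ≠ ⊤)
    {r : ℝ} (hr : 2 ≤ r) :
    ∫⁻ s in Sr r, (‖f0 s‖₊ : ℝ≥0∞) ∂volume
      ≤ 4 * (ENNReal.ofReal ((2/r) ^ (d - 1))) ^ (1/p.toReal) * eLpNorm f0 p (muWeight d) := by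
  set pr : ℝ := p.toReal with hprdef
  have hpr : 1 ≤ pr := by
    rw [hprdef, ← ENNReal.toReal_one]
    exact ENNReal.toReal_mono hp' hp
  have hpr0 : pr ≠ 0 := by linarith
  have hp0 : p ≠ 0 := (lt_of_lt_of_le zero_lt_one hp).ne'
  set N := eLpNorm f0 p (muWeight d) with hN
  set c : ℝ≥0∞ := ENNReal.ofReal ((2/r) ^ (d - 1)) with hc
  have step1 : ∫⁻ s in Sr r, (‖f0 s‖₊ : ℝ≥0∞) ^ pr ∂volume ≤ c * N ^ pr := by
    rw [hN, eLpNorm_rpow_eq f0 d hp0 hp', muWeight_lintegral d (hf.nnnorm.coe_nnreal_ennreal.pow_const pr)]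
    exact lemB2 f0 hf d pr hr
  calc ∫⁻ s in Sr r, (‖f0 s‖₊ : ℝ≥0∞) ∂volume
      ≤ (∫⁻ s in Sr r, (‖f0 s‖₊ : ℝ≥0∞) ^ pr ∂volume) ^ (1/pr) * 4 :=
        lemB1 f0 hf hpr hr
    _ ≤ (c * N ^ pr) ^ (1/pr) * 4 :=
        mul_le_mul_left (ENNReal.rpow_le_rpow step1 (by positivity)) 4
    _ = 4 * c ^ (1/pr) * N := by
        rw [ENNReal.mul_rpow_of_nonneg _ _ (by positivity : (0:ℝ) ≤ 1/pr),
          ← ENNReal.rpow_mul, mul_one_div_cancel hpr0, ENNReal.rpow_one]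
        ring

/-- Tonelli step. -/
lemma lemT (d : ℕ) (f0 : ℝ → ℝ) (hf : Measurable f0) {pr : ℝ} (hpr : 0 ≤ pr)
    {e : ℝ} (he : e ≤ ((d - 1 : ℕ) : ℝ)) :
    ∫⁻ r in Ici (2:ℝ), ENNReal.ofReal (r ^ e) *
        ∫⁻ s in Sr r, (‖f0 s‖₊ : ℝ≥0∞) ^ pr ∂volume ∂volume
      ≤ ENNReal.ofReal (2 ^ |e|) * 4 *
        ∫⁻ s in Ioi (0:ℝ), ENNReal.ofReal (s ^ (d - 1)) * (‖f0 s‖₊ : ℝ≥0∞) ^ pr ∂volume := by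
  set F2 : ℝ → ℝ≥0∞ := fun s => (‖f0 s‖₊ : ℝ≥0∞) ^ pr with hF2
  have hF2m : Measurable F2 := hf.nnnorm.coe_nnreal_ennreal.pow_const pr
  have hF2top : ∀ s, F2 s ≠ ⊤ := fun s =>
    ENNReal.rpow_ne_top_of_nonneg hpr ENNReal.coe_ne_top
  set W : ℝ → ℝ≥0∞ := (Ici (1:ℝ)).indicator
    (fun s => ENNReal.ofReal (2 ^ |e|) * (ENNReal.ofReal (s ^ (d - 1)) * F2 s)) with hW
  have hWm : Measurable W :=
    (measurable_const.mul ((meas_weight d).mul hF2m)).indicator measurableSet_Ici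
  have hWtop : ∀ s, W s ≠ ⊤ := by
    intro s
    rw [hW]
    by_cases hs : s ∈ Ici (1:ℝ)
    · rw [indicator_of_mem hs]
      exact ENNReal.mul_ne_top ENNReal.ofReal_ne_top
        (ENNReal.mul_ne_top ENNReal.ofReal_ne_top (hF2top s))
    · rw [indicator_of_notMem hs]; exact ENNReal.zero_ne_top
  set V : Set (ℝ × ℝ) := {p | |p.1 - p.2| ≤ 2} with hV
  have hVm : MeasurableSet V :=
    measurableSet_le (measurable_fst.sub measurable_snd).abs measurable_const
  set Φ : ℝ × ℝ → ℝ≥0∞ := fun p => V.indicator 1 p * W p.2 with hΦ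
  have hΦm : Measurable Φ := (measurable_const.indicator hVm).mul (hWm.comp measurable_snd)
  -- Step 1: pointwise domination on `Ici 2`
  have step1 : ∀ r ∈ Ici (2:ℝ),
      ENNReal.ofReal (r ^ e) * ∫⁻ s in Sr r, F2 s ∂volume ≤ ∫⁻ s, Φ (r, s) ∂volume := by
    intro r hr
    rw [mem_Ici] at hr
    have hr0 : (0:ℝ) < r := by linarith
    rw [← lintegral_indicator (Sr_meas r),
      ← lintegral_const_mul' _ _ ENNReal.ofReal_ne_top]
    refine lintegral_mono fun s => ?_
    by_cases hs : s ∈ Sr r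
    · rw [indicator_of_mem hs]
      have hs1 : (1:ℝ) ≤ s := one_le_of_mem_Sr hr hs
      have hs2 : r/2 ≤ s := le_trans (le_max_left _ _) hs.1
      have hs3 : r - 2 ≤ s := le_trans (le_max_right _ _) hs.1
      have hs4 : s ≤ r + 2 := hs.2
      have hmemV : (r, s) ∈ V := by
        rw [hV, mem_setOf_eq]
        rw [abs_le]; constructor <;> simp <;> linarith
      have hmemW : s ∈ Ici (1:ℝ) := hs1
      rw [hΦ]
      simp only [indicator_of_mem hmemV, Pi.one_apply, one_mul]
      rw [hW, indicator_of_mem hmemW]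
      -- real inequality: r^e ≤ 2^|e| * s^(d-1)
      have hreal : r ^ e ≤ 2 ^ |e| * s ^ ((d - 1 : ℕ) : ℝ) := by
        have hs0 : (0:ℝ) < s := by linarith
        have hr2s : r ≤ 2 * s := by linarith
        have hs2r : s ≤ 2 * r := by linarith
        have h2 : r ^ e ≤ 2 ^ |e| * s ^ e := by
          rcases le_or_gt 0 e with he0 | he0
          · rw [abs_of_nonneg he0]
            calc r ^ e ≤ (2 * s) ^ e := Real.rpow_le_rpow (le_of_lt hr0) hr2s he0
              _ = 2 ^ e * s ^ e := Real.mul_rpow (by norm_num) (le_of_lt hs0)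
          · rw [abs_of_neg he0]
            have hs2le : s / 2 ≤ r := by linarith
            calc r ^ e ≤ (s / 2) ^ e :=
                  Real.rpow_le_rpow_of_nonpos (by linarith) hs2le (le_of_lt he0)
              _ = s ^ e / 2 ^ e := Real.div_rpow (le_of_lt hs0) (by norm_num : (0:ℝ) ≤ 2) e
              _ = 2 ^ (-e) * s ^ e := by
                  rw [Real.rpow_neg (by norm_num : (0:ℝ) ≤ 2)]
                  ring
        have h3 : s ^ e ≤ s ^ ((d - 1 : ℕ) : ℝ) :=
          Real.rpow_le_rpow_of_exponent_le hs1 he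
        calc r ^ e ≤ 2 ^ |e| * s ^ e := h2
          _ ≤ 2 ^ |e| * s ^ ((d - 1 : ℕ) : ℝ) := by
              have : (0:ℝ) ≤ 2 ^ |e| := by positivity
              nlinarith
      have hrw : s ^ ((d - 1 : ℕ) : ℝ) = s ^ (d - 1) :=
        Real.rpow_natCast s (d - 1)
      calc ENNReal.ofReal (r ^ e) * F2 s
          ≤ (ENNReal.ofReal (2 ^ |e|) * ENNReal.ofReal (s ^ (d - 1))) * F2 s := by
            refine mul_le_mul_left ?_ _
            rw [← ENNReal.ofReal_mul (by positivity)]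
            refine ENNReal.ofReal_le_ofReal ?_
            rw [← hrw]; exact hreal
        _ = ENNReal.ofReal (2 ^ |e|) * ENNReal.ofReal (s ^ (d - 1)) * F2 s := rfl
        _ = ENNReal.ofReal (2 ^ |e|) * (ENNReal.ofReal (s ^ (d - 1)) * F2 s) := by ring
    · rw [indicator_of_notMem hs, mul_zero]
      exact zero_le
  -- Step 2: put it together
  calc ∫⁻ r in Ici (2:ℝ), ENNReal.ofReal (r ^ e) * ∫⁻ s in Sr r, F2 s ∂volume ∂volume
      ≤ ∫⁻ r in Ici (2:ℝ), ∫⁻ s, Φ (r, s) ∂volume ∂volume := by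
        refine setLIntegral_mono' measurableSet_Ici step1
    _ ≤ ∫⁻ r, ∫⁻ s, Φ (r, s) ∂volume ∂volume :=
        setLIntegral_le_lintegral _ _
    _ = ∫⁻ s, ∫⁻ r, Φ (r, s) ∂volume ∂volume := by
        exact lintegral_lintegral_swap hΦm.aemeasurable
    _ = ∫⁻ s, W s * ENNReal.ofReal 4 ∂volume := by
        refine lintegral_congr fun s => ?_
        rw [hΦ]
        simp only
        rw [lintegral_mul_const' _ _ (hWtop s)]
        rw [mul_comm]
        congr 1
        have : (fun r => V.indicator (1 : ℝ × ℝ → ℝ≥0∞) (r, s))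
            = (Icc (s - 2) (s + 2)).indicator (1 : ℝ → ℝ≥0∞) := by
          funext r
          have hiff : |r - s| ≤ 2 ↔ (s - 2 ≤ r ∧ r ≤ s + 2) := by
            rw [abs_le]
            constructor
            · rintro ⟨h1, h2⟩; constructor <;> linarith
            · rintro ⟨h1, h2⟩; constructor <;> linarith
          simp only [Set.indicator_apply, hV, mem_setOf_eq, mem_Icc, Pi.one_apply, hiff]
        rw [this, lintegral_indicator_one measurableSet_Icc, Real.volume_Icc]
        congr 1
        ring
    _ = ENNReal.ofReal 4 * ∫⁻ s, W s ∂volume := by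
        rw [lintegral_mul_const' _ _ ENNReal.ofReal_ne_top, mul_comm]
    _ ≤ ENNReal.ofReal (2 ^ |e|) * 4 *
          ∫⁻ s in Ioi (0:ℝ), ENNReal.ofReal (s ^ (d - 1)) * F2 s ∂volume := by
        rw [hW, lintegral_indicator measurableSet_Ici,
          lintegral_const_mul' _ _ ENNReal.ofReal_ne_top]
        have hsub : Ici (1:ℝ) ⊆ Ioi 0 := fun x hx => by
          simp only [mem_Ici] at hx; simp only [mem_Ioi]; linarith
        have h4 : ENNReal.ofReal (4:ℝ) = (4:ℝ≥0∞) := by norm_num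
        rw [h4]
        calc (4:ℝ≥0∞) * (ENNReal.ofReal (2 ^ |e|) *
              ∫⁻ s in Ici (1:ℝ), ENNReal.ofReal (s ^ (d - 1)) * F2 s ∂volume)
            ≤ (4:ℝ≥0∞) * (ENNReal.ofReal (2 ^ |e|) *
              ∫⁻ s in Ioi (0:ℝ), ENNReal.ofReal (s ^ (d - 1)) * F2 s ∂volume) := by
              gcongr
          _ = ENNReal.ofReal (2 ^ |e|) * 4 *
              ∫⁻ s in Ioi (0:ℝ), ENNReal.ofReal (s ^ (d - 1)) * F2 s ∂volume := by ring

/-- Absolute continuity of Lebesgue measure on `(0,∞)` w.r.t. `muWeight`. -/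
lemma ac_vol_muWeight (d : ℕ) : volume.restrict (Ioi (0:ℝ)) ≪ muWeight d := by
  refine Measure.AbsolutelyContinuous.mk (fun A hA h0 => ?_)
  rw [muWeight, withDensity_apply _ hA] at h0
  rw [lintegral_eq_zero_iff (meas_weight d)] at h0
  have h1 : ∀ᵐ s ∂((volume.restrict (Ioi (0:ℝ))).restrict A), s ∈ Ioi (0:ℝ) :=
    Filter.Eventually.filter_mono (ae_mono Measure.restrict_le_self)
      (ae_restrict_mem measurableSet_Ioi)
  have hfalse : ∀ᵐ s ∂((volume.restrict (Ioi (0:ℝ))).restrict A), False := by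
    filter_upwards [h0, h1] with s h h'
    rw [mem_Ioi] at h'
    have hpow : 0 < s ^ (d-1) := pow_pos h' _
    simp only [Pi.zero_apply, ENNReal.ofReal_eq_zero] at h
    linarith
  have hbot := ae_eq_bot.mp (Filter.eventually_false_iff_eq_bot.mp hfalse)
  rw [← Measure.restrict_apply_univ A, hbot]
  rfl

end R1aux

open R1aux

theorem R1_bound (d : ℕ) (hd : 2 ≤ d) (p q : ℝ≥0∞) (hp : 1 ≤ p) (hpq : p ≤ q) :
    ∃ C : ℝ≥0∞, C ≠ ⊤ ∧ ∀ f0 : ℝ → ℝ, Measurable f0 →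
      eLpNorm (R1op f0) q (muWeight d) ≤ C * eLpNorm f0 p (muWeight d) := by
  classical
  have hq1 : 1 ≤ q := le_trans hp hpq
  have hq0 : q ≠ 0 := (lt_of_lt_of_le zero_lt_one hq1).ne'
  have hp0 : p ≠ 0 := (lt_of_lt_of_le zero_lt_one hp).ne'
  by_cases hqt : q = ⊤
  · by_cases hpt : p = ⊤
    · -- case p = q = ∞
      subst hqt hpt
      refine ⟨4, by norm_num, fun f0 hf => ?_⟩
      rw [eLpNorm_exponent_top, eLpNorm_exponent_top]
      set M := eLpNormEssSup f0 (muWeight d) with hM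
      have hae : ∀ᵐ s ∂(volume.restrict (Ioi (0:ℝ))), (‖f0 s‖₊ : ℝ≥0∞) ≤ M :=
        (ac_vol_muWeight d).ae_le ae_le_eLpNormEssSup
      have key : ∀ r, (‖R1op f0 r‖₊ : ℝ≥0∞) ≤ 4 * M := by
        intro r
        refine le_trans (lemA f0 r) ?_
        by_cases hr : r ∈ Ici (2:ℝ)
        · rw [indicator_of_mem hr]
          rw [mem_Ici] at hr
          have h1 : volume.restrict (Sr r) = (volume.restrict (Ioi (0:ℝ))).restrict (Sr r) := by
            rw [Measure.restrict_restrict (Sr_meas r),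
              inter_eq_left.mpr (Sr_subset_Ioi hr)]
          have hae2 : ∀ᵐ s ∂(volume.restrict (Sr r)), (‖f0 s‖₊ : ℝ≥0∞) ≤ M := by
            rw [h1]
            exact Filter.Eventually.filter_mono (ae_mono Measure.restrict_le_self) hae
          calc ∫⁻ s in Sr r, (‖f0 s‖₊ : ℝ≥0∞) ∂volume
              ≤ ∫⁻ _ in Sr r, M ∂volume := lintegral_mono_ae hae2
            _ = M * volume (Sr r) := setLIntegral_const _ _
            _ ≤ M * 4 := mul_le_mul_right (vol_Sr_le hr) _
            _ = 4 * M := by ring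
        · rw [indicator_of_notMem hr]
          exact zero_le
      exact essSup_le_of_ae_le _ (ae_of_all _ key)
    · -- case p < ∞, q = ∞
      subst hqt
      refine ⟨4, by norm_num, fun f0 hf => ?_⟩
      rw [eLpNorm_exponent_top]
      set N := eLpNorm f0 p (muWeight d) with hN
      set pr : ℝ := p.toReal with hprdef
      have hpr : 1 ≤ pr := by
        rw [hprdef, ← ENNReal.toReal_one]
        exact ENNReal.toReal_mono hpt hp
      have key : ∀ r, (‖R1op f0 r‖₊ : ℝ≥0∞) ≤ 4 * N := by
        intro r
        refine le_trans (lemA f0 r) ?_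
        by_cases hr : r ∈ Ici (2:ℝ)
        · rw [indicator_of_mem hr]
          rw [mem_Ici] at hr
          refine le_trans (lemB d f0 hf hp hpt hr) ?_
          have hc1 : (ENNReal.ofReal ((2/r) ^ (d - 1))) ^ (1/pr) ≤ 1 := by
            apply ENNReal.rpow_le_one _ (by positivity)
            rw [← ENNReal.ofReal_one]
            apply ENNReal.ofReal_le_ofReal
            apply pow_le_one₀ (by positivity)
            rw [div_le_one (by linarith)]; linarith
          calc 4 * (ENNReal.ofReal ((2/r) ^ (d - 1))) ^ (1/pr) * N
              ≤ 4 * 1 * N := by gcongr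
            _ = 4 * N := by ring
        · rw [indicator_of_notMem hr]
          exact zero_le
      exact essSup_le_of_ae_le _ (ae_of_all _ key)
  · -- case q < ∞ (hence p < ∞)
    have hpt : p ≠ ⊤ := fun h => hqt (top_le_iff.mp (h ▸ hpq))
    set pr : ℝ := p.toReal with hprdef
    set qr : ℝ := q.toReal with hqrdef
    have hpr : 1 ≤ pr := by
      rw [hprdef, ← ENNReal.toReal_one]
      exact ENNReal.toReal_mono hpt hp
    have hqr : 1 ≤ qr := by
      rw [hqrdef, ← ENNReal.toReal_one]
      exact ENNReal.toReal_mono hqt hq1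
    have hprqr : pr ≤ qr := ENNReal.toReal_mono hqt hpq
    have hpr0 : pr ≠ 0 := by linarith
    have hqr0 : qr ≠ 0 := by linarith
    have hqrpos : 0 < qr := by linarith
    set dr : ℝ := ((d - 1 : ℕ) : ℝ) with hdrdef
    set b : ℝ := dr * ((1/pr) * (qr - pr)) with hbdef
    have hb0 : 0 ≤ b := by
      apply mul_nonneg (Nat.cast_nonneg _)
      apply mul_nonneg (by positivity)
      linarith
    set e : ℝ := dr - b with hedef
    have he : e ≤ dr := by rw [hedef]; linarith
    set K : ℝ≥0∞ := (4:ℝ≥0∞) ^ (qr - pr) * (4:ℝ≥0∞) ^ pr * ENNReal.ofReal (2 ^ b) *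
      (ENNReal.ofReal (2 ^ |e|) * 4) with hKdef
    have hKtop : K ≠ ⊤ := by
      rw [hKdef]
      refine ENNReal.mul_ne_top (ENNReal.mul_ne_top (ENNReal.mul_ne_top ?_ ?_) ?_) ?_
      · exact ENNReal.rpow_ne_top_of_nonneg (by linarith) (by norm_num)
      · exact ENNReal.rpow_ne_top_of_nonneg (by linarith) (by norm_num)
      · exact ENNReal.ofReal_ne_top
      · exact ENNReal.mul_ne_top ENNReal.ofReal_ne_top (by norm_num)
    have hK0 : K ≠ 0 := by
      rw [hKdef]
      refine mul_ne_zero (mul_ne_zero (mul_ne_zero ?_ ?_) ?_) ?_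
      · simp [ENNReal.rpow_eq_zero_iff]
      · simp [ENNReal.rpow_eq_zero_iff]
      · simp [ENNReal.ofReal_eq_zero]; positivity
      · simp only [ne_eq, mul_eq_zero, not_or]
        constructor
        · simp [ENNReal.ofReal_eq_zero]; positivity
        · norm_num
    refine ⟨K ^ (1/qr), ENNReal.rpow_ne_top_of_nonneg (by positivity) hKtop, fun f0 hf => ?_⟩
    set N := eLpNorm f0 p (muWeight d) with hN
    by_cases hN0 : N = 0
    · -- f0 vanishes: R1op f0 = 0
      have hzero : ∀ r, R1op f0 r = 0 := by
        intro r
        have h := lemA f0 r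
        have h2 : (Ici (2:ℝ)).indicator
            (fun r => ∫⁻ s in Sr r, (‖f0 s‖₊ : ℝ≥0∞) ∂volume) r = 0 := by
          by_cases hr : r ∈ Ici (2:ℝ)
          · rw [indicator_of_mem hr]
            rw [mem_Ici] at hr
            have := lemB d f0 hf hp hpt hr
            rw [← hN, hN0, mul_zero] at this
            exact le_antisymm this (zero_le)
          · exact indicator_of_notMem hr _
        rw [h2] at h
        have h3 : ‖R1op f0 r‖₊ = 0 := by exact_mod_cast le_antisymm h (zero_le)
        exact nnnorm_eq_zero.mp h3
      have : R1op f0 = fun _ => 0 := funext hzero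
      rw [this, eLpNorm_zero']
      exact zero_le
    by_cases hNt : N = ⊤
    · rw [hNt, ENNReal.mul_top (by
        intro h
        exact hK0 (by
          have := ENNReal.rpow_eq_zero_iff.mp h
          rcases this with ⟨h1, _⟩ | ⟨h1, h2⟩
          · exact h1
          · exact absurd h1 hKtop))]
      exact le_top
    -- main case: 0 < N < ∞
    set I : ℝ → ℝ≥0∞ := fun r => ∫⁻ s in Sr r, (‖f0 s‖₊ : ℝ≥0∞) ∂volume with hIdef
    set J : ℝ → ℝ≥0∞ := fun r => ∫⁻ s in Sr r, (‖f0 s‖₊ : ℝ≥0∞) ^ pr ∂volume with hJdef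
    have hImeas : Measurable I := meas_setLIntegral_Sr hf.nnnorm.coe_nnreal_ennreal
    have hJmeas : Measurable J := meas_setLIntegral_Sr (hf.nnnorm.coe_nnreal_ennreal.pow_const pr)
    set K1 : ℝ≥0∞ := N ^ (qr - pr) *
      ((4:ℝ≥0∞) ^ (qr - pr) * (4:ℝ≥0∞) ^ pr * ENNReal.ofReal (2 ^ b)) with hK1def
    have hK1top : K1 ≠ ⊤ := by
      rw [hK1def]
      refine ENNReal.mul_ne_top (ENNReal.rpow_ne_top_of_nonneg (by linarith) hNt) ?_
      refine ENNReal.mul_ne_top (ENNReal.mul_ne_top ?_ ?_) ENNReal.ofReal_ne_top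
      · exact ENNReal.rpow_ne_top_of_nonneg (by linarith) (by norm_num)
      · exact ENNReal.rpow_ne_top_of_nonneg (by linarith) (by norm_num)
    -- pointwise bound (†)
    have dagger : ∀ r ∈ Ici (2:ℝ),
        ENNReal.ofReal (r ^ (d - 1)) * (I r) ^ qr
          ≤ K1 * (ENNReal.ofReal (r ^ e) * J r) := by
      intro r hr
      rw [mem_Ici] at hr
      have hr0 : (0:ℝ) < r := by linarith
      set c : ℝ≥0∞ := ENNReal.ofReal ((2/r) ^ (d - 1)) with hcdef
      have hB : I r ≤ 4 * c ^ (1/pr) * N := lemB d f0 hf hp hpt hr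
      have hIne : I r ≠ ⊤ := by
        intro h
        rw [h] at hB
        have : (4:ℝ≥0∞) * c ^ (1/pr) * N ≠ ⊤ := by
          refine ENNReal.mul_ne_top (ENNReal.mul_ne_top (by norm_num) ?_) hNt
          exact ENNReal.rpow_ne_top_of_nonneg (by positivity) ENNReal.ofReal_ne_top
        exact this (top_le_iff.mp hB)
      by_cases hI0 : I r = 0
      · rw [hI0, ENNReal.zero_rpow_of_pos hqrpos, mul_zero]
        exact zero_le
      have h7 : (I r) ^ qr = (I r) ^ (qr - pr) * (I r) ^ pr := by
        rw [← ENNReal.rpow_add _ _ hI0 hIne, sub_add_cancel]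
      have h8 : (I r) ^ (qr - pr) ≤ (4 * c ^ (1/pr) * N) ^ (qr - pr) :=
        ENNReal.rpow_le_rpow hB (by linarith)
      have h8' : (4 * c ^ (1/pr) * N) ^ (qr - pr)
          = (4:ℝ≥0∞) ^ (qr - pr) * c ^ ((1/pr) * (qr - pr)) * N ^ (qr - pr) := by
        rw [ENNReal.mul_rpow_of_nonneg _ _ (by linarith : (0:ℝ) ≤ qr - pr),
          ENNReal.mul_rpow_of_nonneg _ _ (by linarith : (0:ℝ) ≤ qr - pr),
          ← ENNReal.rpow_mul]
      have h9 : (I r) ^ pr ≤ (4:ℝ≥0∞) ^ pr * J r := by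
        have := lemB1 f0 hf hpr hr
        calc (I r) ^ pr ≤ ((J r) ^ (1/pr) * 4) ^ pr :=
              ENNReal.rpow_le_rpow this (by linarith)
          _ = (4:ℝ≥0∞) ^ pr * J r := by
            rw [ENNReal.mul_rpow_of_nonneg _ _ (by linarith : (0:ℝ) ≤ pr),
              ← ENNReal.rpow_mul, one_div_mul_cancel hpr0, ENNReal.rpow_one, mul_comm]
      -- the weight identity
      have hcpow : c ^ ((1/pr) * (qr - pr)) = ENNReal.ofReal (((2/r) ^ (d-1) : ℝ) ^ ((1/pr) * (qr - pr))) := by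
        rw [hcdef, ENNReal.ofReal_rpow_of_pos (by positivity)]
      have hwid : ENNReal.ofReal (r ^ (d - 1)) * c ^ ((1/pr) * (qr - pr))
          = ENNReal.ofReal (2 ^ b) * ENNReal.ofReal (r ^ e) := by
        rw [hcpow, ← ENNReal.ofReal_mul (by positivity), ← ENNReal.ofReal_mul (by positivity)]
        congr 1
        have h2r : (0:ℝ) < 2/r := by positivity
        have hnpow : ((2/r):ℝ) ^ (d-1) = (2/r) ^ dr := (Real.rpow_natCast _ _).symm
        have hnpow2 : (r:ℝ) ^ (d-1) = r ^ dr := (Real.rpow_natCast _ _).symm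
        rw [hnpow, hnpow2, ← Real.rpow_mul (le_of_lt h2r), hbdef]
        rw [Real.div_rpow (by norm_num) (le_of_lt hr0)]
        rw [div_eq_mul_inv, ← Real.rpow_neg (le_of_lt hr0)]
        rw [mul_comm ((2:ℝ) ^ (dr * (1/pr * (qr - pr)))) _, ← mul_assoc,
          ← Real.rpow_add hr0]
        rw [hedef, hbdef]
        ring_nf
      calc ENNReal.ofReal (r ^ (d - 1)) * (I r) ^ qr
          = ENNReal.ofReal (r ^ (d - 1)) * ((I r) ^ (qr - pr) * (I r) ^ pr) := by rw [h7]
        _ ≤ ENNReal.ofReal (r ^ (d - 1)) *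
            (((4:ℝ≥0∞) ^ (qr - pr) * c ^ ((1/pr) * (qr - pr)) * N ^ (qr - pr)) *
              ((4:ℝ≥0∞) ^ pr * J r)) := by
            refine mul_le_mul_right ?_ _
            refine mul_le_mul' (le_trans h8 (le_of_eq h8')) h9
        _ = (ENNReal.ofReal (r ^ (d - 1)) * c ^ ((1/pr) * (qr - pr))) *
            ((4:ℝ≥0∞) ^ (qr - pr) * N ^ (qr - pr) * ((4:ℝ≥0∞) ^ pr * J r)) := by ring
        _ = (ENNReal.ofReal (2 ^ b) * ENNReal.ofReal (r ^ e)) *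
            ((4:ℝ≥0∞) ^ (qr - pr) * N ^ (qr - pr) * ((4:ℝ≥0∞) ^ pr * J r)) := by rw [hwid]
        _ = K1 * (ENNReal.ofReal (r ^ e) * J r) := by rw [hK1def]; ring
    -- the full chain
    have chain : ∫⁻ r, (‖R1op f0 r‖₊ : ℝ≥0∞) ^ qr ∂(muWeight d) ≤ K * N ^ qr := by
      set G : ℝ → ℝ≥0∞ := (Ici (2:ℝ)).indicator I with hGdef
      have hGmeas : Measurable G := hImeas.indicator measurableSet_Ici
      have step1 : ∫⁻ r, (‖R1op f0 r‖₊ : ℝ≥0∞) ^ qr ∂(muWeight d)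
          ≤ ∫⁻ r, (G r) ^ qr ∂(muWeight d) :=
        lintegral_mono fun r => ENNReal.rpow_le_rpow (lemA f0 r) (by linarith)
      have step2 : ∫⁻ r, (G r) ^ qr ∂(muWeight d)
          = ∫⁻ r in Ioi (0:ℝ), ENNReal.ofReal (r ^ (d-1)) * (G r) ^ qr ∂volume :=
        muWeight_lintegral d (hGmeas.pow_const qr)
      have hIci : Ici (2:ℝ) ⊆ Ioi 0 := fun x hx => by
        simp only [mem_Ici] at hx; simp only [mem_Ioi]; linarith
      have step3 : ∫⁻ r in Ioi (0:ℝ), ENNReal.ofReal (r ^ (d-1)) * (G r) ^ qr ∂volume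
          = ∫⁻ r in Ici (2:ℝ), ENNReal.ofReal (r ^ (d-1)) * (I r) ^ qr ∂volume := by
        have hptw : (fun r => ENNReal.ofReal (r ^ (d-1)) * (G r) ^ qr)
            = (Ici (2:ℝ)).indicator (fun r => ENNReal.ofReal (r ^ (d-1)) * (I r) ^ qr) := by
          funext r
          by_cases hr : r ∈ Ici (2:ℝ)
          · rw [indicator_of_mem hr, hGdef, indicator_of_mem hr]
          · rw [indicator_of_notMem hr, hGdef, indicator_of_notMem hr,
              ENNReal.zero_rpow_of_pos hqrpos, mul_zero]
        rw [hptw, lintegral_indicator measurableSet_Ici,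
          Measure.restrict_restrict measurableSet_Ici, inter_eq_left.mpr hIci]
      have step4 : ∫⁻ r in Ici (2:ℝ), ENNReal.ofReal (r ^ (d-1)) * (I r) ^ qr ∂volume
          ≤ ∫⁻ r in Ici (2:ℝ), K1 * (ENNReal.ofReal (r ^ e) * J r) ∂volume :=
        setLIntegral_mono' measurableSet_Ici dagger
      have step5 : ∫⁻ r in Ici (2:ℝ), K1 * (ENNReal.ofReal (r ^ e) * J r) ∂volume
          = K1 * ∫⁻ r in Ici (2:ℝ), ENNReal.ofReal (r ^ e) * J r ∂volume :=
        lintegral_const_mul' _ _ hK1top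
      have step6 : ∫⁻ r in Ici (2:ℝ), ENNReal.ofReal (r ^ e) * J r ∂volume
          ≤ ENNReal.ofReal (2 ^ |e|) * 4 *
            ∫⁻ s in Ioi (0:ℝ), ENNReal.ofReal (s ^ (d-1)) * (‖f0 s‖₊ : ℝ≥0∞) ^ pr ∂volume :=
        lemT d f0 hf (by linarith) he
      have step7 : ∫⁻ s in Ioi (0:ℝ), ENNReal.ofReal (s ^ (d-1)) * (‖f0 s‖₊ : ℝ≥0∞) ^ pr ∂volume
          = N ^ pr := by
        rw [hN, eLpNorm_rpow_eq f0 d hp0 hpt, muWeight_lintegral d (hf.nnnorm.coe_nnreal_ennreal.pow_const pr)]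
      calc ∫⁻ r, (‖R1op f0 r‖₊ : ℝ≥0∞) ^ qr ∂(muWeight d)
          ≤ ∫⁻ r, (G r) ^ qr ∂(muWeight d) := step1
        _ = ∫⁻ r in Ioi (0:ℝ), ENNReal.ofReal (r ^ (d-1)) * (G r) ^ qr ∂volume := step2
        _ = ∫⁻ r in Ici (2:ℝ), ENNReal.ofReal (r ^ (d-1)) * (I r) ^ qr ∂volume := step3
        _ ≤ ∫⁻ r in Ici (2:ℝ), K1 * (ENNReal.ofReal (r ^ e) * J r) ∂volume := step4
        _ = K1 * ∫⁻ r in Ici (2:ℝ), ENNReal.ofReal (r ^ e) * J r ∂volume := step5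
        _ ≤ K1 * (ENNReal.ofReal (2 ^ |e|) * 4 * N ^ pr) := by
            rw [← step7]; exact mul_le_mul_right step6 _
        _ = K * N ^ qr := by
            rw [hK1def, hKdef]
            have : N ^ (qr - pr) * N ^ pr = N ^ qr := by
              rw [← ENNReal.rpow_add _ _ hN0 hNt, sub_add_cancel]
            calc N ^ (qr - pr) * ((4:ℝ≥0∞) ^ (qr - pr) * (4:ℝ≥0∞) ^ pr * ENNReal.ofReal (2 ^ b)) *
                  (ENNReal.ofReal (2 ^ |e|) * 4 * N ^ pr)
                = ((4:ℝ≥0∞) ^ (qr - pr) * (4:ℝ≥0∞) ^ pr * ENNReal.ofReal (2 ^ b) *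
                    (ENNReal.ofReal (2 ^ |e|) * 4)) * (N ^ (qr - pr) * N ^ pr) := by ring
              _ = _ := by rw [this]
    -- conclude
    rw [eLpNorm_eq_lintegral_rpow_enorm_toReal hq0 hqt, ← hqrdef]
    calc (∫⁻ r, (‖R1op f0 r‖₊ : ℝ≥0∞) ^ qr ∂(muWeight d)) ^ (1/qr)
        ≤ (K * N ^ qr) ^ (1/qr) := ENNReal.rpow_le_rpow chain (by positivity)
      _ = K ^ (1/qr) * N := by
          rw [ENNReal.mul_rpow_of_nonneg _ _ (by positivity : (0:ℝ) ≤ 1/qr),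
            ← ENNReal.rpow_mul, mul_one_div_cancel hqr0, ENNReal.rpow_one]
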